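/- Let X be a set and let a, b be permutations of X (acting on the right). Set I = supp(a) ∩ supp(b), and suppose that supp(a) ∖ I and supp(b) ∖ I are finite sets of equal cardinality. Suppose there is a bijection x₀ : supp(a) → supp(b) such that (p a)x₀ = (p x₀) b for all p ∈ supp(a), and such that the set {p ∈ supp(a) : p x₀ ≠ p} is finite. Then there exists a finitely supported permutation x of X with x^{-1} a x = b. -/

import Mathlib

namespace HoughtonPaper

/-- The set `X_n = {1,…,n} × ℕ` (rays indexed by `Fin n`). -/
abbrev X (n : ℕ) := Fin n × ℕ

/-- `g` acts as the translation by `t i` on the ray `i` from the point `z` on. -/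
def EvTransFrom {n : ℕ} (g : Equiv.Perm (X n)) (t : Fin n → ℤ) (z : ℕ) : Prop :=
  ∀ (i : Fin n) (m : ℕ), z ≤ m →
    (g (i, m)).1 = i ∧ ((g (i, m)).2 : ℤ) = (m : ℤ) + t i

/-- `g` is eventually a translation with translation vector `t`. -/
def EvTrans {n : ℕ} (g : Equiv.Perm (X n)) (t : Fin n → ℤ) : Prop :=
  ∃ z : ℕ, EvTransFrom g t z

/-- Membership in Houghton's group `H_n`. -/
def InH {n : ℕ} (g : Equiv.Perm (X n)) : Prop :=
  ∃ t : Fin n → ℤ, EvTrans g t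

/-- Support of a permutation. -/
def supp {α : Type*} (g : Equiv.Perm α) : Set α := {x | g x ≠ x}

/-- Membership in `FSym(X_n)`, the finitely supported permutations. -/
def InFSym {n : ℕ} (g : Equiv.Perm (X n)) : Prop := (supp g).Finite

/-- Two sets are almost equal if their symmetric difference is finite. -/
def AlmostEq {α : Type*} (A B : Set α) : Prop := (symmDiff A B).Finite

/-- The set `X_{i,r}(g) = {(i,m) : m ≡ r mod |t_i(g)|}`, for `t` the translation vector. -/
def Xir {n : ℕ} (i : Fin n) (t : Fin n → ℤ) (r : ℕ) : Set (X n) :=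
  {p : X n | p.1 = i ∧ p.2 % (t i).natAbs = r}

/-- Forward orbit `{(i,m)g^k : k ≥ 0}`. -/
def fwdOrbit {n : ℕ} (g : Equiv.Perm (X n)) (p : X n) : Set (X n) :=
  Set.range fun k : ℕ => (g ^ k) p

/-- The orbit `{x g^k : k ∈ ℤ}`. -/
def orbit {n : ℕ} (g : Equiv.Perm (X n)) (p : X n) : Set (X n) :=
  Set.range fun k : ℤ => (g ^ k) p

/-- `A` is an infinite orbit of `g`. -/
def IsInfOrbit {n : ℕ} (g : Equiv.Perm (X n)) (A : Set (X n)) : Prop :=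
  (∃ p : X n, A = orbit g p) ∧ A.Infinite

/-- The generating relation of `∼_g`: some infinite orbit of `g` is almost equal
to `X_{i,r}(g) ∪ X_{j,s}(g)`. -/
def BaseRel {n : ℕ} (g : Equiv.Perm (X n)) (t : Fin n → ℤ) (i j : Fin n) : Prop :=
  ∃ r s : ℕ, r < (t i).natAbs ∧ s < (t j).natAbs ∧
    ∃ A : Set (X n), IsInfOrbit g A ∧ AlmostEq A (Xir i t r ∪ Xir j t s)

/-- The equivalence relation `∼_g` on the rays, generated by `BaseRel`. -/
def SimRel {n : ℕ} (g : Equiv.Perm (X n)) (t : Fin n → ℤ) : Fin n → Fin n → Prop :=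
  Relation.EqvGen (BaseRel g t)

def genFun {n : ℕ} [NeZero n] (i : Fin n) : X n → X n :=
  fun p =>
    if p.1 = 0 then ((0 : Fin n), p.2 + 1)
    else if p.1 = i then (if p.2 = 0 then ((0 : Fin n), 0) else (i, p.2 - 1))
    else p

def genInvFun {n : ℕ} [NeZero n] (i : Fin n) : X n → X n :=
  fun p =>
    if p.1 = 0 then (if p.2 = 0 then (i, 0) else ((0 : Fin n), p.2 - 1))
    else if p.1 = i then (i, p.2 + 1)
    else p

/-- The generator `g_i` of Houghton's group (ray `1` of the paper is ray `0` here). -/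
def gen {n : ℕ} [NeZero n] (i : Fin n) (hi : i ≠ 0) : Equiv.Perm (X n) where
  toFun := genFun i
  invFun := genInvFun i
  left_inv := by
    rintro ⟨j, m⟩
    by_cases hj : j = 0
    · subst hj
      simp [genFun, genInvFun]
    · by_cases hji : j = i
      · subst hji
        rcases Nat.eq_zero_or_pos m with hm | hm
        · subst hm; simp [genFun, genInvFun, hi]
        · simp [genFun, genInvFun, hi, hm.ne', Nat.sub_add_cancel hm]
      · simp [genFun, genInvFun, hj, hji]
  right_inv := by
    rintro ⟨j, m⟩
    by_cases hj : j = 0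
    · subst hj
      rcases Nat.eq_zero_or_pos m with hm | hm
      · subst hm; simp [genFun, genInvFun, hi]
      · simp [genFun, genInvFun, hm.ne', hi.symm, Nat.sub_add_cancel hm]
    · by_cases hji : j = i
      · subst hji
        simp [genFun, genInvFun, hj]
      · simp [genFun, genInvFun, hj, hji]

/-- The transposition `τ` exchanging `(1,0)` and `(2,0)` (here `(0,0)` and `(1,0)`). -/
def tau (n : ℕ) [NeZero n] : Equiv.Perm (X n) :=
  Equiv.swap ((0 : Fin n), 0) ((1 : Fin n), 0)

/-- Letters of the alphabet `{g_2,…,g_n}^{±1}`. -/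
abbrev Letter (n : ℕ) [NeZero n] := {i : Fin n // i ≠ 0} × Bool

/-- Words over `{g_2,…,g_n}^{±1}`. -/
abbrev Word (n : ℕ) [NeZero n] := List (Letter n)

def evalLetter {n : ℕ} [NeZero n] (l : Letter n) : Equiv.Perm (X n) :=
  if l.2 then gen l.1.1 l.1.2 else (gen l.1.1 l.1.2)⁻¹

/-- The element of `Sym(X_n)` represented by a word. -/
def wordProd {n : ℕ} [NeZero n] (w : Word n) : Equiv.Perm (X n) :=
  (w.map evalLetter).prod

end HoughtonPaper

open HoughtonPaper

theorem statement8 (α : Type*) (a b : Equiv.Perm α)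
    (hfa : (supp a \ (supp a ∩ supp b)).Finite)
    (hfb : (supp b \ (supp a ∩ supp b)).Finite)
    (hcard : (supp a \ (supp a ∩ supp b)).ncard = (supp b \ (supp a ∩ supp b)).ncard)
    (x₀ : α → α) (hbij : Set.BijOn x₀ (supp a) (supp b))
    (hint : ∀ p ∈ supp a, x₀ (a p) = b (x₀ p))
    (hfin : {p ∈ supp a | x₀ p ≠ p}.Finite) :
    ∃ x : Equiv.Perm α, (supp x).Finite ∧ x⁻¹ * a * x = b := by
  classical
  rcases isEmpty_or_nonempty α with hα | hα
  · refine ⟨1, ?_, Equiv.ext fun q => (IsEmpty.false q).elim⟩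
    exact Set.toFinite _
  set S := supp a with hS
  set T := supp b with hT
  rw [Set.diff_self_inter] at hfa hcard
  rw [Set.diff_inter_self_eq_diff] at hfb hcard
  -- a bijection from T \ S to S \ T
  obtain ⟨φ, hφ⟩ : ∃ φ : α → α, Set.BijOn φ (T \ S) (S \ T) := by
    refine hfb.exists_bijOn_of_encard_eq ?_
    rw [← hfb.cast_ncard_eq, ← hfa.cast_ncard_eq, hcard]
  have haS : ∀ p, p ∈ S → a p ∈ S := fun p hp heq => hp (a.injective heq)
  have hbfix : ∀ p, p ∉ T → b p = p := fun p hp => not_not.mp hp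
  have hafix : ∀ p, p ∉ S → a p = p := fun p hp => not_not.mp hp
  set f : α → α := fun p => if p ∈ S then x₀ p else if p ∈ T then φ p else p with hf
  have h1 : Set.BijOn f S T := hbij.congr fun p hp => by simp [hf, hp]
  have h2 : Set.BijOn f (T \ S) (S \ T) :=
    hφ.congr fun p hp => by simp [hf, hp.1, hp.2]
  have h3 : Set.BijOn f ((S ∪ T)ᶜ) ((S ∪ T)ᶜ) := by
    refine (Set.bijOn_id _).congr fun p hp => ?_
    have hp' : p ∉ S ∧ p ∉ T := by simpa [not_or] using hp
    simp [hf, hp'.1, hp'.2]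
  have hdisj : Disjoint S (T \ S) := Set.disjoint_left.mpr fun x hx hx2 => hx2.2 hx
  have h12 : Set.BijOn f (S ∪ (T \ S)) (T ∪ (S \ T)) := by
    refine h1.union h2 ?_
    refine (Set.injOn_union hdisj).mpr ⟨h1.injOn, h2.injOn, fun x hx y hy hxy => ?_⟩
    exact (h2.mapsTo hy).2 (hxy ▸ h1.mapsTo hx)
  have h12' : Set.BijOn f (S ∪ T) (S ∪ T) := by
    have e1 : S ∪ (T \ S) = S ∪ T := Set.union_diff_self
    have e2 : T ∪ (S \ T) = S ∪ T := by rw [Set.union_diff_self, Set.union_comm]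
    rwa [e1, e2] at h12
  have hfbij : Function.Bijective f := by
    rw [← Set.bijOn_univ, ← Set.union_compl_self (S ∪ T)]
    refine h12'.union h3 ?_
    refine (Set.injOn_union disjoint_compl_right).mpr
      ⟨h12'.injOn, h3.injOn, fun x hx y hy hxy => (h3.mapsTo hy) (hxy ▸ h12'.mapsTo hx)⟩
  set e : Equiv.Perm α := Equiv.ofBijective f hfbij with he
  have heapp : ∀ p, e p = f p := fun p => rfl
  have key : ∀ p, e (a p) = b (e p) := by
    intro p
    by_cases hp : p ∈ S
    · rw [heapp, heapp, hf]
      simp only [haS p hp, hp, if_pos]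
      exact hint p hp
    · by_cases hpT : p ∈ T
      · have hmem : p ∈ T \ S := ⟨hpT, hp⟩
        have himg : φ p ∈ S \ T := hφ.mapsTo hmem
        rw [hafix p hp, heapp, hf]
        simp only [hp, hpT, if_neg, if_pos, if_false]
        exact (hbfix _ himg.2).symm
      · rw [hafix p hp, heapp, hf]
        simp only [hp, hpT, if_neg, if_false]
        exact (hbfix p hpT).symm
  refine ⟨e⁻¹, ?_, ?_⟩
  · have hsub : supp e⁻¹ ⊆ {p ∈ S | x₀ p ≠ p} ∪ (T \ S) := by
      intro p hp
      have hpe : e p ≠ p := fun h => hp (show e⁻¹ p = p by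
        nth_rewrite 1 [← h]; exact Equiv.symm_apply_apply e p)
      rw [heapp, hf] at hpe
      by_cases hpS : p ∈ S
      · left; exact ⟨hpS, by simpa [hpS] using hpe⟩
      · right
        by_cases hpT : p ∈ T
        · exact ⟨hpT, hpS⟩
        · simp [hpS, hpT] at hpe
    exact (hfin.union hfb).subset hsub
  · ext q
    have : (e⁻¹⁻¹ * a * e⁻¹) q = e (a (e⁻¹ q)) := rfl
    rw [this, key]; exact congrArg b (Equiv.apply_symm_apply e q)
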